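/- For every integer a ≥ 2, the Frobenius number of S(a), i.e. the greatest natural number not belonging to S(a), equals ⌈(a − 1)/2⌉·l_a − 1. -/

import Mathlib

/-- The Lucas sequence: l 0 = 2, l 1 = 1, l (n+2) = l (n+1) + l n. -/
def lucas : ℕ → ℕ
  | 0 => 2
  | 1 => 1
  | n + 2 => lucas (n + 1) + lucas n

/-- The modified (monotone) Lucas sequence: l̃ 0 = 1, l̃ 1 = 2, l̃ n = l n for n ≥ 2. -/
def ltil : ℕ → ℕ
  | 0 => 1
  | 1 => 2
  | n + 2 => lucas (n + 2)

/-- β x : minimal number of summands in a representation of x as a sum of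
modified Lucas numbers (with repetitions allowed). -/
noncomputable def beta (x : ℕ) : ℕ :=
  sInf {s : ℕ | ∃ k : ℕ, ∃ b : ℕ → ℕ,
    x = ∑ i ∈ Finset.range (k + 1), b i * ltil i ∧ s = ∑ i ∈ Finset.range (k + 1), b i}

/-- γ x : the greatest k with l̃ k ≤ x (for x ≥ 1). -/
noncomputable def gamma (x : ℕ) : ℕ := sSup {k : ℕ | ltil k ≤ x}

/-- S a : the additive submonoid of ℕ generated by {l_a} ∪ {l_a + l_n : n ∈ ℕ}. -/
def Sset (a : ℕ) : AddSubmonoid ℕ :=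
  AddSubmonoid.closure ({lucas a} ∪ {x : ℕ | ∃ n : ℕ, x = lucas a + lucas n})

/-- T a : the additive submonoid of ℕ generated by {l_a + l_n : n ∈ ℕ}. -/
def Tset (a : ℕ) : AddSubmonoid ℕ :=
  AddSubmonoid.closure {x : ℕ | ∃ n : ℕ, x = lucas a + lucas n}

def sw (n : ℕ) : ℕ := if n = 0 then 1 else if n = 1 then 0 else n

lemma lucas_add_two (n : ℕ) : lucas (n+2) = lucas (n+1) + lucas n := rfl

lemma lucas_pos : ∀ n, 0 < lucas n
  | 0 => by decide
  | 1 => by decide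
  | n + 2 => by rw [lucas_add_two]; have := lucas_pos n; omega

lemma ltil_two_add (n : ℕ) : ltil (n+2) = lucas (n+2) := rfl

lemma ltil_eq_lucas {n : ℕ} (h : 2 ≤ n) : ltil n = lucas n := by
  obtain ⟨m, rfl⟩ : ∃ m, n = m + 2 := ⟨n - 2, by omega⟩
  rfl

lemma ltil_sw (n : ℕ) : ltil (sw n) = lucas n := by
  match n with
  | 0 => rfl
  | 1 => rfl
  | n + 2 => simp [sw]; rfl

lemma lucas_sw (n : ℕ) : lucas (sw n) = ltil n := by
  match n with
  | 0 => rfl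
  | 1 => rfl
  | n + 2 => simp [sw]; rfl

lemma ltil_pos (n : ℕ) : 0 < ltil n := by
  match n with
  | 0 => decide
  | 1 => decide
  | n + 2 => rw [ltil_two_add]; exact lucas_pos _

lemma ltil_lt_succ : ∀ n, ltil n < ltil (n+1)
  | 0 => by decide
  | 1 => by decide
  | 2 => by decide
  | n + 3 => by
      show ltil (n+3) < ltil (n+4)
      have h1 := lucas_pos (n+2)
      have e : ltil (n+3) = lucas (n+3) := rfl
      have e2 : ltil (n+4) = lucas (n+3) + lucas (n+2) := rfl
      omega

lemma ltil_strictMono : StrictMono ltil := strictMono_nat_of_lt_succ ltil_lt_succ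

lemma ltil_ge (n : ℕ) : n + 1 ≤ ltil n := by
  induction n with
  | zero => decide
  | succ k ih => have := ltil_lt_succ k; omega

lemma ltil_rec {n : ℕ} (h : n ≠ 1) : ltil (n+2) = ltil (n+1) + ltil n := by
  match n, h with
  | 0, _ => decide
  | (k+2), _ =>
      rw [ltil_two_add, ltil_two_add, ltil_two_add]
      exact lucas_add_two (k+2)

lemma lucas_fib (b : ℕ) : ∀ j, lucas (b + 1 + j) = Nat.fib (j+1) * lucas (b+1) + Nat.fib j * lucas b := by
  intro j
  induction j using Nat.twoStepInduction with
  | zero => simp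
  | one => show lucas (b+2) = _ ; rw [lucas_add_two]; simp [Nat.fib_one, Nat.fib_two]
  | more j ih1 ih2 =>
      have : b + 1 + (j + 2) = (b + 1 + j) + 2 := by omega
      rw [this, lucas_add_two]
      have e1 : b + 1 + j + 1 = b + 1 + (j+1) := by omega
      rw [e1, ih2, ih1]
      have hf2 : Nat.fib (j+2) = Nat.fib j + Nat.fib (j+1) := Nat.fib_add_two
      have hf3 : Nat.fib (j+2+1) = Nat.fib (j+1) + Nat.fib (j+2) := by
        rw [show j+2+1 = (j+1)+2 from rfl, Nat.fib_add_two]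
      rw [hf3, hf2]
      ring

def lsum (S : Multiset ℕ) : ℕ := (S.map ltil).sum

def msum (S : Multiset ℕ) : ℕ := (S.map (fun i => 3 ^ i)).sum

def Sparse (S : Multiset ℕ) : Prop :=
  (∀ i, S.count i ≤ 1) ∧ (∀ i, i ≠ 1 → ¬(i ∈ S ∧ i + 1 ∈ S)) ∧ ¬(0 ∈ S ∧ 2 ∈ S)

lemma lsum_cons (i : ℕ) (S : Multiset ℕ) : lsum (i ::ₘ S) = ltil i + lsum S := by
  simp [lsum]

lemma lsum_zero : lsum 0 = 0 := rfl

lemma lsum_add (S T : Multiset ℕ) : lsum (S + T) = lsum S + lsum T := by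
  simp [lsum]

lemma lsum_replicate (n x : ℕ) : lsum (Multiset.replicate n x) = n * ltil x := by
  simp [lsum, Multiset.map_replicate, Multiset.sum_replicate]

lemma sparse_cons {i : ℕ} {S : Multiset ℕ} (h : Sparse (i ::ₘ S)) : Sparse S := by
  obtain ⟨h1, h2, h3⟩ := h
  refine ⟨fun j => ?_, fun j hj hmem => ?_, fun hmem => ?_⟩
  · have := h1 j
    rw [Multiset.count_cons] at this
    split_ifs at this <;> omega
  · exact h2 j hj ⟨Multiset.mem_cons_of_mem hmem.1, Multiset.mem_cons_of_mem hmem.2⟩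
  · exact h3 ⟨Multiset.mem_cons_of_mem hmem.1, Multiset.mem_cons_of_mem hmem.2⟩

lemma mem_le_lsum {i : ℕ} {S : Multiset ℕ} (h : i ∈ S) : ltil i ≤ lsum S := by
  obtain ⟨T, rfl⟩ := Multiset.exists_cons_of_mem h
  rw [lsum_cons]; omega

lemma lsum_le_of_le {S T : Multiset ℕ} (h : S ≤ T) : lsum S ≤ lsum T := by
  obtain ⟨U, rfl⟩ := Multiset.le_iff_exists_add.mp h
  rw [lsum_add]; omega

lemma le_singleton_of (S : Multiset ℕ) (x : ℕ) (h1 : S.count x ≤ 1)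
    (h2 : ∀ j ∈ S, j = x) : S ≤ {x} := by
  rw [Multiset.le_iff_count]
  intro j
  rw [Multiset.count_singleton]
  split_ifs with hj
  · subst hj; exact h1
  · have : S.count j = 0 := Multiset.count_eq_zero.mpr (fun hmem => hj (h2 j hmem))
    omega

lemma le_pair_of (S : Multiset ℕ) (x y : ℕ) (hxy : x ≠ y) (h1 : S.count x ≤ 1) (h1' : S.count y ≤ 1)
    (h2 : ∀ j ∈ S, j = x ∨ j = y) : S ≤ {x, y} := by
  rw [Multiset.le_iff_count]
  intro j
  rw [show ({x, y} : Multiset ℕ) = x ::ₘ {y} from rfl, Multiset.count_cons, Multiset.count_singleton]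
  by_cases hx : j = x
  · subst hx; simpa [hxy] using h1
  · by_cases hy : j = y
    · subst hy; simpa [Ne.symm hxy] using h1'

    · have : S.count j = 0 := by
        rw [Multiset.count_eq_zero]
        intro hmem
        rcases h2 j hmem with h | h <;> [exact hx h; exact hy h]
      omega

lemma sparse_sum_le : ∀ K (S : Multiset ℕ), Sparse S → (∀ i ∈ S, i ≤ K) → lsum S ≤ ltil (K+1) + 1 := by
  intro K
  induction K using Nat.strong_induction_on with
  | _ K ih =>
    intro S hS hbd
    match K with
    | 0 =>
      have h01 : S ≤ {0} := le_singleton_of S 0 (hS.1 0) (fun j hj => by have := hbd j hj; omega)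
      have hle := lsum_le_of_le h01
      have h1 : lsum {0} = 1 := rfl
      show lsum S ≤ 3
      omega
    | 1 =>
      by_cases h0 : 0 ∈ S
      · have h1 : 1 ∉ S := fun h1 => hS.2.1 0 (by omega) ⟨h0, h1⟩
        have : S ≤ {0} := le_singleton_of S 0 (hS.1 0)
          (fun j hj => by have := hbd j hj; interval_cases j; rfl; exact absurd hj h1)
        have hle := lsum_le_of_le this
        have h1 : lsum {0} = 1 := rfl
        show lsum S ≤ 3 + 1
        omega
      · have : S ≤ {1} := le_singleton_of S 1 (hS.1 1)
          (fun j hj => by have := hbd j hj; interval_cases j; exact absurd hj h0; rfl)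
        have hle := lsum_le_of_le this
        have h1 : lsum {1} = 2 := rfl
        show lsum S ≤ 3 + 1
        omega
    | 2 =>
      have hl3 : ltil 3 = 4 := rfl
      by_cases h0 : 0 ∈ S
      · have h1 : 1 ∉ S := fun h1 => hS.2.1 0 (by omega) ⟨h0, h1⟩
        have h2 : 2 ∉ S := fun h2 => hS.2.2 ⟨h0, h2⟩
        have : S ≤ {0} := le_singleton_of S 0 (hS.1 0)
          (fun j hj => by
            have := hbd j hj
            interval_cases j
            · rfl
            · exact absurd hj h1
            · exact absurd hj h2)
        have hle := lsum_le_of_le this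
        have h1 : lsum {0} = 1 := rfl
        show lsum S ≤ 4 + 1
        omega
      · have : S ≤ {1, 2} := le_pair_of S 1 2 (by omega) (hS.1 1) (hS.1 2)
          (fun j hj => by
            have := hbd j hj
            interval_cases j
            · exact absurd hj h0
            · left; rfl
            · right; rfl)
        have hle := lsum_le_of_le this
        have hp : lsum {1, 2} = 5 := rfl
        show lsum S ≤ 4 + 1
        omega
    | (K+3) =>
      by_cases hK : (K+3) ∈ S
      · obtain ⟨T, rfl⟩ := Multiset.exists_cons_of_mem hK
        have hsp := sparse_cons hS
        have hbdT : ∀ i ∈ T, i ≤ K + 1 := by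
          intro i hi
          have hle : i ≤ K + 3 := hbd i (Multiset.mem_cons_of_mem hi)
          have hne3 : i ≠ K + 3 := by
            intro h
            subst h
            have := hS.1 (K+3)
            rw [Multiset.count_cons_self] at this
            have : T.count (K+3) = 0 := by omega
            rw [Multiset.count_eq_zero] at this
            exact this hi
          have hne2 : i ≠ K + 2 := by
            intro h
            subst h
            exact hS.2.1 (K+2) (by omega)
              ⟨Multiset.mem_cons_of_mem hi, Multiset.mem_cons_self _ _⟩
          omega
        have hT : lsum T ≤ ltil (K+2) + 1 := ih (K+1) (by omega) T hsp hbdT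
        rw [lsum_cons]
        show ltil (K+3) + lsum T ≤ ltil (K+4) + 1
        have hrec : ltil (K+4) = ltil (K+3) + ltil (K+2) := ltil_rec (n := K+2) (by omega)
        omega
      · have hbd' : ∀ i ∈ S, i ≤ K + 2 := by
          intro i hi
          have := hbd i hi
          have : i ≠ K + 3 := fun h => hK (h ▸ hi)
          omega
        have h1 : lsum S ≤ ltil (K+3) + 1 := ih (K+2) (by omega) S hS hbd'
        show lsum S ≤ ltil (K+4) + 1
        have h2 : ltil (K+3) < ltil (K+4) := ltil_lt_succ (K+3)
        omega

lemma msum_cons (i : ℕ) (S : Multiset ℕ) : msum (i ::ₘ S) = 3 ^ i + msum S := by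
  simp [msum]

lemma exists_two_cons {S : Multiset ℕ} {i : ℕ} (h : 2 ≤ S.count i) :
    ∃ T, S = i ::ₘ i ::ₘ T := by
  have hle : Multiset.replicate 2 i ≤ S := Multiset.le_count_iff_replicate_le.mp h
  obtain ⟨T, hT⟩ := Multiset.le_iff_exists_add.mp hle
  exact ⟨T, by rw [hT]; simp [Multiset.replicate_succ]⟩

lemma exists_pair_cons {S : Multiset ℕ} {i j : ℕ} (hij : i ≠ j) (hi : i ∈ S) (hj : j ∈ S) :
    ∃ T, S = i ::ₘ j ::ₘ T := by
  have hle : ({i, j} : Multiset ℕ) ≤ S := by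
    rw [Multiset.le_iff_count]
    intro k
    rw [show ({i, j} : Multiset ℕ) = i ::ₘ {j} from rfl, Multiset.count_cons,
      Multiset.count_singleton]
    have hci : 1 ≤ S.count i := Multiset.one_le_count_iff_mem.mpr hi
    have hcj : 1 ≤ S.count j := Multiset.one_le_count_iff_mem.mpr hj
    by_cases hki : k = i
    · subst hki; simp [hij]; omega
    · by_cases hkj : k = j
      · subst hkj; simp [hki]; omega
      · simp [hki, hkj]
  obtain ⟨T, hT⟩ := Multiset.le_iff_exists_add.mp hle
  exact ⟨T, by
    rw [hT, show ({i, j} : Multiset ℕ) = i ::ₘ {j} from rfl, Multiset.cons_add,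
      Multiset.singleton_add]⟩

lemma two_lucas (k : ℕ) : lucas (k+3) + lucas (k+3) = lucas (k+4) + lucas (k+1) := by
  have e1 : lucas (k+4) = lucas (k+3) + lucas (k+2) := rfl
  have e2 : lucas (k+3) = lucas (k+2) + lucas (k+1) := rfl
  omega

lemma reduce_step {S : Multiset ℕ} (h : ¬ Sparse S) :
    ∃ T, lsum T = lsum S ∧
      (T.card < S.card ∨ (T.card = S.card ∧ msum S < msum T)) := by
  by_cases h1 : ∀ i, S.count i ≤ 1
  · by_cases h2 : ∀ i, i ≠ 1 → ¬(i ∈ S ∧ i + 1 ∈ S)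
    · have h3 : 0 ∈ S ∧ 2 ∈ S := by
        by_contra hc
        exact h ⟨h1, h2, hc⟩
      obtain ⟨T, rfl⟩ := exists_pair_cons (by omega) h3.1 h3.2
      refine ⟨3 ::ₘ T, ?_, Or.inl ?_⟩
      · rw [lsum_cons, lsum_cons, lsum_cons]
        have : ltil 0 + ltil 2 = ltil 3 := rfl
        omega
      · simp
    · push_neg at h2
      obtain ⟨i, hne1, hi, hi1⟩ := h2
      obtain ⟨T, rfl⟩ := exists_pair_cons (by omega) hi hi1
      match i, hne1 with
      | 0, _ =>
        refine ⟨2 ::ₘ T, ?_, Or.inl (by simp)⟩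
        rw [lsum_cons, lsum_cons, lsum_cons]
        have v0 : ltil 0 = 1 := rfl
        have v1 : ltil (0+1) = 2 := rfl
        have v2 : ltil 2 = 3 := rfl
        omega
      | (k+2), _ =>
        refine ⟨(k+4) ::ₘ T, ?_, Or.inl (by simp)⟩
        rw [lsum_cons, lsum_cons, lsum_cons]
        have e0 : ltil (k+2+1) = ltil (k+3) := rfl
        have : ltil (k+4) = ltil (k+3) + ltil (k+2) := ltil_rec (by omega)
        omega
  · push_neg at h1
    obtain ⟨i, hi⟩ := h1
    obtain ⟨T, rfl⟩ := exists_two_cons (show 2 ≤ S.count i by omega)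
    match i with
    | 0 =>
      refine ⟨1 ::ₘ T, ?_, Or.inl (by simp)⟩
      rw [lsum_cons, lsum_cons, lsum_cons]
      have v0 : ltil 0 = 1 := rfl
      have v1 : ltil 1 = 2 := rfl
      omega
    | 1 =>
      refine ⟨3 ::ₘ T, ?_, Or.inl (by simp)⟩
      rw [lsum_cons, lsum_cons, lsum_cons]
      have v1 : ltil 1 = 2 := rfl
      have v3 : ltil 3 = 4 := rfl
      omega
    | 2 =>
      refine ⟨1 ::ₘ 3 ::ₘ T, ?_, Or.inr ⟨by simp, ?_⟩⟩
      · rw [lsum_cons, lsum_cons, lsum_cons, lsum_cons]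
        have v1 : ltil 1 = 2 := rfl
        have v2 : ltil 2 = 3 := rfl
        have v3 : ltil 3 = 4 := rfl
        omega
      · rw [msum_cons, msum_cons, msum_cons, msum_cons]
        norm_num
        omega
    | (k+3) =>
      refine ⟨(k+4) ::ₘ (sw (k+1)) ::ₘ T, ?_, Or.inr ⟨by simp, ?_⟩⟩
      · rw [lsum_cons, lsum_cons, lsum_cons, lsum_cons]
        have e1 : ltil (k+3) = lucas (k+3) := rfl
        have e2 : ltil (k+4) = lucas (k+4) := rfl
        have e3 : ltil (sw (k+1)) = lucas (k+1) := ltil_sw (k+1)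
        have := two_lucas k
        omega
      · rw [msum_cons, msum_cons, msum_cons, msum_cons]
        have e1 : (3:ℕ) ^ (k+4) = 3 * 3 ^ (k+3) := by ring
        have e2 : 0 < (3:ℕ) ^ (sw (k+1)) := pow_pos (by norm_num) _
        omega

lemma sparse_zero : Sparse 0 := by
  refine ⟨fun i => by simp, fun i hi hmem => by simp at hmem, by simp⟩

lemma msum_le (S : Multiset ℕ) : msum S ≤ S.card * 3 ^ lsum S := by
  have h : ∀ x ∈ S.map (fun i => 3 ^ i), x ≤ 3 ^ lsum S := by
    intro x hx
    rw [Multiset.mem_map] at hx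
    obtain ⟨i, hi, rfl⟩ := hx
    apply Nat.pow_le_pow_right (by norm_num)
    have := mem_le_lsum hi
    have := ltil_ge i
    omega
  have := Multiset.sum_le_card_nsmul _ _ h
  simpa [msum, Multiset.card_map, Nat.smul_one_eq_cast] using this

lemma exists_sparse (S : Multiset ℕ) : ∃ T, Sparse T ∧ lsum T = lsum S ∧ T.card ≤ S.card := by
  set L := lsum S with hL
  set c₀ := S.card with hc₀
  suffices h : ∀ n (U : Multiset ℕ), lsum U = L → U.card ≤ c₀ →
      U.card * (c₀ * 3 ^ L + 1) - msum U = n → ∃ T, Sparse T ∧ lsum T = L ∧ T.card ≤ U.card by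
    exact h _ S rfl le_rfl rfl
  intro n
  induction n using Nat.strong_induction_on with
  | _ n ih =>
    intro U hU hUc hn
    by_cases hsp : Sparse U
    · exact ⟨U, hsp, hU, le_rfl⟩
    · have hUne : U ≠ 0 := fun h => hsp (h ▸ sparse_zero)
      have hUpos : 0 < U.card := Multiset.card_pos.mpr hUne
      have hc₀pos : 0 < c₀ := lt_of_lt_of_le hUpos hUc
      obtain ⟨T, hsum, hcase⟩ := reduce_step hsp
      have hTL : lsum T = L := hsum.trans hU
      have hmsU : msum U ≤ c₀ * 3 ^ L := by
        have h1 := msum_le U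
        rw [hU] at h1
        exact le_trans h1 (Nat.mul_le_mul_right _ hUc)
      have hmsT : msum T ≤ T.card * 3 ^ L := by
        have h1 := msum_le T
        rwa [hTL] at h1
      rcases hcase with hlt | ⟨heq, hm⟩
      · have hTc : T.card ≤ c₀ := by omega
        have hmul : T.card * (c₀ * 3 ^ L + 1) + (c₀ * 3 ^ L + 1) ≤ U.card * (c₀ * 3 ^ L + 1) := by
          have h2 : (T.card + 1) * (c₀ * 3 ^ L + 1) ≤ U.card * (c₀ * 3 ^ L + 1) :=
            Nat.mul_le_mul_right _ hlt
          rw [Nat.succ_mul] at h2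
          exact h2
        obtain ⟨T', h1, h2, h3⟩ := ih (T.card * (c₀ * 3 ^ L + 1) - msum T) (by omega)
          T hTL hTc rfl
        exact ⟨T', h1, h2, by omega⟩
      · have hTc : T.card ≤ c₀ := heq ▸ hUc
        have hmsT2 : msum T ≤ c₀ * 3 ^ L := le_trans hmsT (Nat.mul_le_mul_right _ hTc)
        have hA : c₀ * 3 ^ L + 1 ≤ U.card * (c₀ * 3 ^ L + 1) :=
          Nat.le_mul_of_pos_left _ hUpos
        have heq2 : T.card * (c₀ * 3 ^ L + 1) = U.card * (c₀ * 3 ^ L + 1) := by rw [heq]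
        obtain ⟨T', h1, h2, h3⟩ := ih (T.card * (c₀ * 3 ^ L + 1) - msum T) (by omega)
          T hTL hTc rfl
        exact ⟨T', h1, h2, by omega⟩

lemma lucas_le_succ {n : ℕ} (h : 1 ≤ n) : lucas n ≤ lucas (n+1) := by
  match n, h with
  | 1, _ => decide
  | (k+2), _ =>
    show lucas (k+2) ≤ lucas (k+3)
    have e : lucas (k+3) = lucas (k+2) + lucas (k+1) := rfl
    have := lucas_pos (k+1)
    omega

lemma lucas_ge_three {n : ℕ} (h : 2 ≤ n) : 3 ≤ lucas n := by
  have h1 : ltil 2 ≤ ltil n := ltil_strictMono.monotone h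
  rw [ltil_eq_lucas h] at h1
  exact h1

lemma upper_rep : ∀ a, 2 ≤ a → ∀ r, r < lucas a → ∃ S : Multiset ℕ, lsum S = r ∧ S.card ≤ a / 2 := by
  intro a
  induction a using Nat.strong_induction_on with
  | _ a ih =>
    intro ha r hr
    match a, ha with
    | 2, _ =>
      rw [show lucas 2 = 3 from rfl] at hr
      interval_cases r
      · exact ⟨0, rfl, by simp⟩
      · exact ⟨{0}, by simp [lsum, ltil], by simp⟩
      · exact ⟨{1}, by simp [lsum, ltil], by simp⟩
    | 3, _ =>
      rw [show lucas 3 = 4 from rfl] at hr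
      interval_cases r
      · exact ⟨0, rfl, by simp⟩
      · exact ⟨{0}, by simp [lsum, ltil], by simp⟩
      · exact ⟨{1}, by simp [lsum, ltil], by simp⟩
      · exact ⟨{2}, by simp [lsum, ltil]; rfl, by simp⟩
    | (c+4), _ =>
      have hrec3 : lucas (c+3) = lucas (c+2) + lucas (c+1) := rfl
      have hrec4 : lucas (c+4) = lucas (c+3) + lucas (c+2) := rfl
      have hmono : lucas (c+1) ≤ lucas (c+2) := lucas_le_succ (by omega)
      by_cases h1 : r < lucas (c+2)
      · obtain ⟨S, hS1, hS2⟩ := ih (c+2) (by omega) (by omega) r h1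
        exact ⟨S, hS1, by omega⟩
      · by_cases h2 : r < lucas (c+3)
        · obtain ⟨S, hS1, hS2⟩ := ih (c+2) (by omega) (by omega) (r - lucas (c+2)) (by omega)
          refine ⟨(c+2) ::ₘ S, ?_, ?_⟩
          · rw [lsum_cons, hS1, ltil_two_add]
            omega
          · rw [Multiset.card_cons]
            omega
        · obtain ⟨S, hS1, hS2⟩ := ih (c+2) (by omega) (by omega) (r - lucas (c+3)) (by omega)
          refine ⟨(c+3) ::ₘ S, ?_, ?_⟩
          · rw [lsum_cons, hS1, show ltil (c+3) = lucas (c+3) from rfl]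
            omega
          · rw [Multiset.card_cons]
            omega

lemma lower_bound : ∀ a, 2 ≤ a → ∀ d, 1 ≤ d → ∀ S : Multiset ℕ, Sparse S →
    lsum S = d * lucas a - 1 → a / 2 + 1 ≤ S.card + d := by
  intro a
  induction a using Nat.strong_induction_on with
  | _ a ih_a =>
    intro ha d
    induction d using Nat.strong_induction_on with
    | _ d ih_d =>
      intro hd S hsp hsum
      have hL3 : 3 ≤ lucas a := lucas_ge_three ha
      have hdL : 1 * 3 ≤ d * lucas a := Nat.mul_le_mul hd hL3
      have hSne : S ≠ 0 := by
        intro h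
        rw [h, lsum_zero] at hsum
        omega
      have ht1 : 1 ≤ S.card := Multiset.card_pos.mpr hSne
      by_cases ha3 : a ≤ 3
      · have : a / 2 = 1 := by omega
        omega
      · by_cases hd1 : d = 1
        · subst hd1
          have hone : 1 * lucas a = lucas a := one_mul _
          have e2 := lucas_add_two (a-2)
          rw [show a-2+2 = a by omega, show a-2+1 = a-1 by omega] at e2
          have e3 : 3 ≤ lucas (a-2) := lucas_ge_three (by omega)
          by_cases hm : (a-1) ∈ S
          · obtain ⟨T, rfl⟩ := Multiset.exists_cons_of_mem hm
            rw [lsum_cons] at hsum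
            have e1 : ltil (a-1) = lucas (a-1) := ltil_eq_lucas (by omega)
            have honem : 1 * lucas (a-2) = lucas (a-2) := one_mul _
            have hTsum : lsum T = 1 * lucas (a-2) - 1 := by omega
            have hres := ih_a (a-2) (by omega) (by omega) 1 le_rfl T (sparse_cons hsp) hTsum
            have hdiv : (a-2)/2 + 1 = a/2 := by omega
            rw [Multiset.card_cons]
            omega
          · have hbd : ∀ i ∈ S, i ≤ a - 2 := by
              intro i hi
              have h1 := mem_le_lsum hi
              have h2 : ltil a = lucas a := ltil_eq_lucas (by omega)
              have h3 : ltil i < ltil a := by omega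
              have h4 : i < a := ltil_strictMono.lt_iff_lt.mp h3
              have h5 : i ≠ a - 1 := fun h => hm (h ▸ hi)
              omega
            have hM := sparse_sum_le (a-2) S hsp hbd
            have e1 : ltil (a-2+1) = lucas (a-1) := by
              rw [show a-2+1 = a-1 by omega]
              exact ltil_eq_lucas (by omega)
            omega
        · by_cases hbig : ∃ i ∈ S, a + 1 ≤ i
          · obtain ⟨i, hiS, hia⟩ := hbig
            have hfib := lucas_fib (a-1) (i - a)
            rw [show a-1+1 = a by omega, show a + (i - a) = i by omega] at hfib
            have hmem := mem_le_lsum hiS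
            have e1 : ltil i = lucas i := ltil_eq_lucas (by omega)
            have hfibpos : 1 ≤ Nat.fib (i - a + 1) := Nat.fib_pos.mpr (by omega)
            have hfibpos' : 1 ≤ Nat.fib (i - a) := Nat.fib_pos.mpr (by omega)
            have hfible : Nat.fib (i - a) ≤ Nat.fib (i - a + 1) := Nat.fib_le_fib_succ
            have hd2 : Nat.fib (i - a + 1) + 1 ≤ d := by
              have h1 : Nat.fib (i - a + 1) * lucas a < d * lucas a := by omega
              have := lt_of_mul_lt_mul_right h1 (Nat.zero_le _)
              omega
            obtain ⟨T, hST⟩ := Multiset.exists_cons_of_mem hiS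
            have hS'sum : lsum (Multiset.replicate (Nat.fib (i - a)) (a-1) + T)
                = (d - Nat.fib (i - a + 1)) * lucas a - 1 := by
              have e2 : ltil (a-1) = lucas (a-1) := ltil_eq_lucas (by omega)
              rw [lsum_add, lsum_replicate, e2]
              have hT : ltil i + lsum T = lsum S := by rw [hST, lsum_cons]
              have e4 : (d - Nat.fib (i - a + 1)) * lucas a + Nat.fib (i - a + 1) * lucas a
                  = d * lucas a := by
                rw [← Nat.add_mul]
                congr 1
                omega
              omega
            obtain ⟨S'', hsp'', hsum'', hcard''⟩ := exists_sparse _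
            have hres := ih_d (d - Nat.fib (i - a + 1)) (by omega) (by omega) S'' hsp''
              (by rw [hsum'', hS'sum])
            have hcard' : (Multiset.replicate (Nat.fib (i - a)) (a-1) + T).card
                = Nat.fib (i - a) + T.card := by simp
            have hTcard : S.card = T.card + 1 := by rw [hST]; simp
            omega
          · push_neg at hbig
            by_cases hA : a ∈ S
            · obtain ⟨T, rfl⟩ := Multiset.exists_cons_of_mem hA
              rw [lsum_cons] at hsum
              have e1 : ltil a = lucas a := ltil_eq_lucas (by omega)
              have e4 : (d - 1) * lucas a + lucas a = d * lucas a := by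
                rw [← Nat.succ_mul, Nat.succ_eq_add_one, show d - 1 + 1 = d by omega]
              have hT : lsum T = (d-1) * lucas a - 1 := by omega
              have hres := ih_d (d-1) (by omega) (by omega) T (sparse_cons hsp) hT
              rw [Multiset.card_cons]
              omega
            · have hbd : ∀ i ∈ S, i ≤ a - 1 := by
                intro i hi
                have h1 := hbig i hi
                have h2 : i ≠ a := fun h => hA (h ▸ hi)
                omega
              have hM := sparse_sum_le (a-1) S hsp hbd
              have e1 : ltil (a-1+1) = lucas a := by
                rw [show a-1+1 = a by omega]
                exact ltil_eq_lucas (by omega)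
              have h2L : 2 * lucas a ≤ d * lucas a := Nat.mul_le_mul_right _ (by omega)
              omega

lemma mem_Sset_iff {a x : ℕ} :
    x ∈ Sset a ↔ ∃ c : ℕ, ∃ S : Multiset ℕ, x = (c + S.card) * lucas a + (S.map lucas).sum := by
  constructor
  · intro hx
    induction hx using AddSubmonoid.closure_induction with
    | mem y hy =>
      rcases hy with hy | ⟨n, rfl⟩
      · refine ⟨1, 0, ?_⟩
        simp at hy
        simp [hy]
      · exact ⟨0, {n}, by simp⟩
    | zero => exact ⟨0, 0, by simp⟩
    | add y z hy hz ihy ihz =>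
      obtain ⟨c1, S1, rfl⟩ := ihy
      obtain ⟨c2, S2, rfl⟩ := ihz
      refine ⟨c1 + c2, S1 + S2, ?_⟩
      rw [Multiset.card_add, Multiset.map_add, Multiset.sum_add]
      ring
  · rintro ⟨c, S, rfl⟩
    have hL : lucas a ∈ Sset a := AddSubmonoid.subset_closure (Or.inl rfl)
    have hgen : ∀ n : ℕ, lucas a + lucas n ∈ Sset a := fun n =>
      AddSubmonoid.subset_closure (Or.inr ⟨n, rfl⟩)
    have key : ∀ S : Multiset ℕ, S.card * lucas a + (S.map lucas).sum ∈ Sset a := by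
      intro T
      induction T using Multiset.induction with
      | empty => simpa using zero_mem _
      | cons i T ih =>
        have e : (i ::ₘ T).card * lucas a + ((i ::ₘ T).map lucas).sum
            = (lucas a + lucas i) + (T.card * lucas a + (T.map lucas).sum) := by
          rw [Multiset.card_cons, Multiset.map_cons, Multiset.sum_cons]
          ring
        rw [e]
        exact add_mem (hgen i) ih
    have e : (c + S.card) * lucas a + (S.map lucas).sum
        = c * lucas a + (S.card * lucas a + (S.map lucas).sum) := by ring
    rw [e]
    refine add_mem ?_ (key S)
    have := AddSubmonoid.nsmul_mem (S := Sset a) hL c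
    simpa [smul_eq_mul] using this

theorem frobenius_S (a : ℕ) (ha : 2 ≤ a) :
    IsGreatest {x : ℕ | x ∉ Sset a} ((a - 1 + 1) / 2 * lucas a - 1) := by
  have hL3 : 3 ≤ lucas a := lucas_ge_three ha
  have hm1 : 1 ≤ a / 2 := by omega
  have ha' : (a - 1 + 1) = a := by omega
  rw [ha']
  have hmL : 3 ≤ a / 2 * lucas a := le_trans (by omega) (Nat.mul_le_mul hm1 hL3)
  constructor
  · simp only [Set.mem_setOf_eq]
    intro hmem
    rw [mem_Sset_iff] at hmem
    obtain ⟨c, S, hx⟩ := hmem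
    have hjm : c + S.card < a / 2 := by
      by_contra hcon
      push_neg at hcon
      have h1 : a / 2 * lucas a ≤ (c + S.card) * lucas a := Nat.mul_le_mul_right _ hcon
      omega
    have hsub : (a / 2 - (c + S.card)) * lucas a + (c + S.card) * lucas a
        = a / 2 * lucas a := by
      rw [← Nat.add_mul]
      congr 1
      omega
    have hsum : (S.map lucas).sum = (a / 2 - (c + S.card)) * lucas a - 1 := by omega
    have hconv : lsum (S.map sw) = (S.map lucas).sum := by
      rw [lsum, Multiset.map_map]
      congr 1
      apply Multiset.map_congr rfl
      intro i _
      exact ltil_sw i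
    obtain ⟨S', hsp', hsum', hcard'⟩ := exists_sparse (S.map sw)
    have hfin := lower_bound a ha (a / 2 - (c + S.card)) (by omega) S' hsp'
      (by rw [hsum', hconv, hsum])
    have hcS : (S.map sw).card = S.card := Multiset.card_map _ _
    omega
  · intro x hx
    simp only [Set.mem_setOf_eq] at hx
    by_contra hcon
    push_neg at hcon
    apply hx
    have hxge : a / 2 * lucas a ≤ x := by omega
    have hLpos : 0 < lucas a := by omega
    have hdm := Nat.div_add_mod x (lucas a)
    have hrlt : x % lucas a < lucas a := Nat.mod_lt _ hLpos
    have hqm : a / 2 ≤ x / lucas a := by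
      by_contra hq
      push_neg at hq
      have h1 : x / lucas a + 1 ≤ a / 2 := hq
      have h2 : (x / lucas a + 1) * lucas a ≤ a / 2 * lucas a := Nat.mul_le_mul_right _ h1
      rw [Nat.add_mul, one_mul] at h2
      have h3 : lucas a * (x / lucas a) = (x / lucas a) * lucas a := Nat.mul_comm _ _
      omega
    obtain ⟨S, hS1, hS2⟩ := upper_rep a ha (x % lucas a) hrlt
    rw [mem_Sset_iff]
    refine ⟨x / lucas a - S.card, S.map sw, ?_⟩
    have hcS : (S.map sw).card = S.card := Multiset.card_map _ _
    have hconv : ((S.map sw).map lucas).sum = lsum S := by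
      rw [Multiset.map_map, lsum]
      congr 1
      apply Multiset.map_congr rfl
      intro i _
      exact lucas_sw i
    rw [hcS, hconv, hS1]
    have e : (x / lucas a - S.card + S.card) = x / lucas a := by omega
    rw [e]
    have h3 : lucas a * (x / lucas a) = (x / lucas a) * lucas a := Nat.mul_comm _ _
    omega
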